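/- Consider the k-server problem on a tree T where servers at nodes v_1, ..., v_k serve a request at node q by repeated phases: in each phase, every active server (one with no other server on its path to q) moves one step toward q, until some server reaches q. Then the server that reaches q is one at minimal initial distance to q among all servers, and the number of phases equals min_i dist(v_i, q). -/
import Mathlib


variable {V : Type} [Fintype V] [DecidableEq V]

/-- `u` is an ancestor of `v` in the tree `G` rooted at `root`:
`u` lies on the unique path from `root` to `v`. -/
def isAncestor (G : SimpleGraph V) (root u v : V) : Prop :=
  G.dist root u + G.dist u v = G.dist root v

/-- `w` is the lowest common ancestor of `u` and `v`: a common ancestor such that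
every common ancestor of `u` and `v` is an ancestor of `w`. -/
def isLCA (G : SimpleGraph V) (root u v w : V) : Prop :=
  isAncestor G root w u ∧ isAncestor G root w v ∧
    ∀ x, isAncestor G root x u → isAncestor G root x v → isAncestor G root x w

attribute [local instance] Classical.propDecidable

/-- Server `i` is active in configuration `c` for query `q`: no other server lies
strictly on its path to `q`, and among servers sharing its node it has minimal index. -/
def isActive (G : SimpleGraph V) (q : V) {k : ℕ} (c : Fin k → V) (i : Fin k) : Prop :=
  (∀ j, c j = c i → i ≤ j) ∧
    ∀ j, c j ≠ c i → ¬ (G.dist (c i) (c j) + G.dist (c j) q = G.dist (c i) q)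

/-- in the phase-based process where every active server moves one
step towards `q`, the first server reaches `q` after exactly `D = min_i dist(v_i,q)`
phases, and any server at `q` at that moment started at minimal distance `D`. -/
theorem stmt16 (G : SimpleGraph V) (hG : G.IsTree) (q : V) {k : ℕ} (hk : 0 < k)
    (stepTo : V → V)
    (hstep : ∀ v, v ≠ q → G.Adj v (stepTo v) ∧ G.dist (stepTo v) q + 1 = G.dist v q)
    (hstepq : stepTo q = q)
    (c : ℕ → Fin k → V)
    (hdyn : ∀ t i, c (t + 1) i = if isActive G q (c t) i then stepTo (c t i) else c t i)
    (D : ℕ) (hD : IsLeast {d | ∃ i, G.dist (c 0 i) q = d} D) :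
    (∃ i, c D i = q) ∧ (∀ i, c D i = q → G.dist (c 0 i) q = D) ∧
      ∀ t < D, ∀ i, c t i ≠ q := by
  have hconn := hG.isConnected
  -- distances decrease by at most 1 per phase
  have hA : ∀ t i, G.dist (c t i) q ≤ G.dist (c (t+1) i) q + 1 := by
    intro t i
    rw [hdyn]
    split
    · by_cases hq : c t i = q
      · rw [hq, hstepq]; omega
      · have := (hstep _ hq).2; omega
    · omega
  have hA' : ∀ t i, G.dist (c 0 i) q ≤ G.dist (c t i) q + t := by
    intro t i
    induction t with
    | zero => simp
    | succ n ih => have := hA n i; omega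
  -- the minimum distance at time t ≤ D is exactly D - t
  have hmin : ∀ t ≤ D, IsLeast {d | ∃ i, G.dist (c t i) q = d} (D - t) := by
    intro t ht
    induction t with
    | zero => simpa using hD
    | succ n ih =>
      have hn : n ≤ D := by omega
      obtain ⟨⟨i0, hi0⟩, hlb⟩ := ih hn
      constructor
      · -- pick the server of minimal index at the node of a minimal-distance server
        set S : Finset (Fin k) := Finset.univ.filter (fun j => c n j = c n i0) with hS
        have hSne : S.Nonempty := ⟨i0, by simp [hS]⟩
        set i := S.min' hSne with hi
        have hci : c n i = c n i0 := by
          have := S.min'_mem hSne; simpa [hS] using this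
        have hdi : G.dist (c n i) q = D - n := by rw [hci]; exact hi0
        have hact : isActive G q (c n) i := by
          constructor
          · intro j hj
            exact S.min'_le j (by simp [hS, hj, hci])
          · intro j hne habs
            have h1 : 0 < G.dist (c n i) (c n j) :=
              hconn.pos_dist_of_ne (Ne.symm hne)
            have h2 : D - n ≤ G.dist (c n j) q := hlb ⟨j, rfl⟩
            omega
        refine ⟨i, ?_⟩
        rw [hdyn, if_pos hact]
        by_cases hq : c n i = q
        · rw [hq] at hdi
          rw [hq, hstepq]
          simp only [SimpleGraph.dist_self] at hdi ⊢
          omega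
        · have := (hstep _ hq).2
          omega
      · rintro d ⟨j, hj⟩
        have h1 := hA n j
        have h2 : D - n ≤ G.dist (c n j) q := hlb ⟨j, rfl⟩
        omega
  obtain ⟨⟨i, hi⟩, _⟩ := hmin D le_rfl
  simp only [Nat.sub_self] at hi
  refine ⟨⟨i, (hconn.dist_eq_zero_iff).mp hi⟩, ?_, ?_⟩
  · intro j hj
    have h1 : G.dist (c 0 j) q ≤ G.dist (c D j) q + D := hA' D j
    rw [hj] at h1
    simp only [SimpleGraph.dist_self] at h1
    have h2 : D ≤ G.dist (c 0 j) q := hD.2 ⟨j, rfl⟩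
    omega
  · intro t ht j hj
    obtain ⟨_, hlb⟩ := hmin t (le_of_lt ht)
    have : D - t ≤ G.dist (c t j) q := hlb ⟨j, rfl⟩
    rw [hj] at this
    simp only [SimpleGraph.dist_self] at this
    omega
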